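/- If G is a co-comparability graph with maximum degree Δ, then bw(G) ≤ 2Δ − 1, and consequently cub(G) ≤ 2Δ. -/

import Mathlib

def HasCubeRep {V : Type*} (G : SimpleGraph V) (k : ℕ) : Prop :=
  ∃ c : V → Fin k → ℝ, ∀ u v : V, u ≠ v → (G.Adj u v ↔ ∀ i : Fin k, |c u i - c v i| ≤ 1)

noncomputable def cubicity {V : Type*} (G : SimpleGraph V) : ℕ :=
  sInf {k | HasCubeRep G k}

noncomputable def bandwidth {V : Type*} [Fintype V] (G : SimpleGraph V) : ℕ :=
  sInf {b | ∃ e : V ≃ Fin (Fintype.card V),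
    ∀ u v : V, G.Adj u v → |((e u : ℕ) : ℤ) - ((e v : ℕ) : ℤ)| ≤ (b : ℤ)}

/-- `G` is a co-comparability graph: its complement admits a transitive orientation,
i.e. there is a strict partial order `r` on the vertices such that distinct vertices
are non-adjacent iff they are comparable under `r`. -/
def IsCoComparabilityGraph {V : Type*} (G : SimpleGraph V) : Prop :=
  ∃ r : V → V → Prop, (∀ a b c, r a b → r b c → r a c) ∧ (∀ a, ¬ r a a) ∧
    ∀ u v : V, u ≠ v → (¬ G.Adj u v ↔ (r u v ∨ r v u))

namespace CoCompAux

/-- Tie-breaking function along residue chains: `etaFun A b p` depends on the chain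
`p, p-b, p-2b, ...`; it strictly increases across a "non-adjacent" step and stays
equal across an "adjacent" step, always staying in `[0,1)`. -/
noncomputable def etaFun (A : ℕ → ℕ → Bool) (b : ℕ) (p : ℕ) : ℝ :=
  if h : 0 < b ∧ b ≤ p then
    (if A (p - b) p then etaFun A b (p - b) else (etaFun A b (p - b) + 1) / 2)
  else 0
termination_by p
decreasing_by all_goals exact Nat.sub_lt (Nat.lt_of_lt_of_le h.1 h.2) h.1

theorem etaFun_mem (A : ℕ → ℕ → Bool) (b : ℕ) (p : ℕ) :
    0 ≤ etaFun A b p ∧ etaFun A b p < 1 := by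
  induction p using Nat.strong_induction_on with
  | _ p ih =>
    rw [etaFun]
    split_ifs with h hA
    · exact ih _ (Nat.sub_lt (Nat.lt_of_lt_of_le h.1 h.2) h.1)
    · have := ih (p - b) (Nat.sub_lt (Nat.lt_of_lt_of_le h.1 h.2) h.1)
      constructor <;> [linarith [this.1]; linarith [this.2]]
    · norm_num

theorem etaFun_true {A : ℕ → ℕ → Bool} {b p : ℕ} (hb : 0 < b) (hp : b ≤ p)
    (hA : A (p - b) p = true) : etaFun A b p = etaFun A b (p - b) := by
  rw [etaFun]; simp [hb, hp, hA]

theorem etaFun_false {A : ℕ → ℕ → Bool} {b p : ℕ} (hb : 0 < b) (hp : b ≤ p)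
    (hA : A (p - b) p = false) : etaFun A b p = (etaFun A b (p - b) + 1) / 2 := by
  rw [etaFun]; simp [hb, hp, hA]

variable {V : Type*} (G : SimpleGraph V) (f : V → ℕ) (b : ℕ) (j : ℕ)

/-- The candidate set for the sinking potential of residue class `j`. -/
def sSet (x : V) : Set ℝ :=
  {0} ∪ {z : ℝ | ∃ q : V, f q % b = j ∧ ∃ w : G.Walk q x,
    z = 2 - (w.length : ℝ) + (((f x : ℕ) : ℝ) - ((f q : ℕ) : ℝ)) / ((b : ℝ) + 1)}

/-- The sinking potential for residue class `j`. -/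
noncomputable def sFun (x : V) : ℝ := sSup (sSet G f b j x)

variable {G f b}
variable {j : ℕ}

/-- Along a walk, positions move by at most `b` per step. -/
theorem walk_bound (hband : ∀ u v : V, G.Adj u v → (f v : ℝ) ≤ (f u : ℝ) + b)
    {u v : V} (w : G.Walk u v) : |(f u : ℝ) - (f v : ℝ)| ≤ (w.length : ℝ) * b := by
  induction w with
  | nil => simp
  | cons h w ih =>
    rename_i a c d
    have h1 : (f c : ℝ) ≤ (f a : ℝ) + b := hband _ _ h
    have h2 : (f a : ℝ) ≤ (f c : ℝ) + b := hband _ _ h.symm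
    rw [SimpleGraph.Walk.length_cons]
    have habs : |(f a : ℝ) - (f c : ℝ)| ≤ b := abs_le.2 ⟨by linarith, by linarith⟩
    calc |(f a : ℝ) - (f d : ℝ)| ≤ |(f a : ℝ) - (f c : ℝ)| + |(f c : ℝ) - (f d : ℝ)| :=
          abs_sub_le _ _ _
      _ ≤ b + (w.length : ℝ) * b := add_le_add habs ih
      _ = ((w.length : ℝ) + 1) * b := by ring
      _ = (((w.length : ℕ) + 1 : ℕ) : ℝ) * b := by push_cast; ring

theorem sSet_bddAbove (hband : ∀ u v : V, G.Adj u v → (f v : ℝ) ≤ (f u : ℝ) + b) (x : V) :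
    BddAbove (sSet G f b j x) := by
  refine ⟨2, ?_⟩
  rintro z (rfl | ⟨q, hq, w, rfl⟩)
  · norm_num
  · have h1 := walk_bound hband w
    have hb1 : (0 : ℝ) < (b : ℝ) + 1 := by positivity
    have h2 : ((f x : ℕ) : ℝ) - ((f q : ℕ) : ℝ) ≤ (w.length : ℝ) * b :=
      le_trans (le_trans (le_abs_self _) (by rw [abs_sub_comm]; exact h1)) le_rfl
    have h3 : ((f x : ℕ) : ℝ) - ((f q : ℕ) : ℝ) ≤ (w.length : ℝ) * ((b : ℝ) + 1) := by
      nlinarith [w.length.cast_nonneg (α := ℝ)]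
    have h4 : (((f x : ℕ) : ℝ) - ((f q : ℕ) : ℝ)) / ((b : ℝ) + 1) ≤ (w.length : ℝ) :=
      (div_le_iff₀ hb1).2 (by linarith)
    linarith

theorem sSet_nonempty (x : V) : (sSet G f b j x).Nonempty := ⟨0, Or.inl rfl⟩

theorem sFun_nonneg (hband : ∀ u v : V, G.Adj u v → (f v : ℝ) ≤ (f u : ℝ) + b) (x : V) :
    0 ≤ sFun G f b j x :=
  le_csSup (sSet_bddAbove hband x) (Or.inl rfl)

theorem sFun_center (hband : ∀ u v : V, G.Adj u v → (f v : ℝ) ≤ (f u : ℝ) + b)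
    {x : V} (hx : f x % b = j) : 2 ≤ sFun G f b j x := by
  have : (2 : ℝ) ∈ sSet G f b j x := by
    refine Or.inr ⟨x, hx, SimpleGraph.Walk.nil, by simp⟩
  exact le_csSup (sSet_bddAbove hband x) this

/-- Lipschitz property of the potential along edges. -/
theorem sFun_lip (hband : ∀ u v : V, G.Adj u v → (f v : ℝ) ≤ (f u : ℝ) + b)
    {x y : V} (hxy : G.Adj x y) :
    sFun G f b j y ≤ sFun G f b j x + 1 + (((f y : ℕ) : ℝ) - ((f x : ℕ) : ℝ)) / ((b : ℝ) + 1) := by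
  have hb1 : (0 : ℝ) < (b : ℝ) + 1 := by positivity
  have hstep : |(f x : ℝ) - (f y : ℝ)| ≤ b := by
    have h1 := hband _ _ hxy
    have h2 := hband _ _ hxy.symm
    exact abs_le.2 ⟨by linarith, by linarith⟩
  have hβ : -1 < (((f y : ℕ) : ℝ) - ((f x : ℕ) : ℝ)) / ((b : ℝ) + 1) := by
    rw [lt_div_iff₀ hb1]
    have := (abs_le.1 hstep).2
    push_cast at this ⊢
    linarith
  apply csSup_le (sSet_nonempty _)
  rintro z (rfl | ⟨q, hq, w, rfl⟩)
  · have := sFun_nonneg (j := j) hband x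
    linarith
  · have hcand : (2 : ℝ) - ((w.concat hxy.symm).length : ℝ) +
        (((f x : ℕ) : ℝ) - ((f q : ℕ) : ℝ)) / ((b : ℝ) + 1) ≤ sFun G f b j x :=
      le_csSup (sSet_bddAbove hband x) (Or.inr ⟨q, hq, w.concat hxy.symm, rfl⟩)
    rw [SimpleGraph.Walk.length_concat] at hcand
    push_cast at hcand ⊢
    have : (((f y : ℕ) : ℝ) - ((f q : ℕ) : ℝ)) / ((b : ℝ) + 1) =
        (((f x : ℕ) : ℝ) - ((f q : ℕ) : ℝ)) / ((b : ℝ) + 1) +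
        (((f y : ℕ) : ℝ) - ((f x : ℕ) : ℝ)) / ((b : ℝ) + 1) := by
      rw [← add_div]; ring_nf
    rw [this]
    linarith

/-- The key "victim" bound: if `u` is a center and `v` is a non-neighbour at small
positive distance `d` to the right, then the potential at `v` is at most `1 + (d-1)/(b+1)`. -/
theorem sFun_victim (hb : 0 < b) (hf : Function.Injective f)
    (hband : ∀ u v : V, G.Adj u v → (f v : ℝ) ≤ (f u : ℝ) + b)
    {u v : V} (hu : f u % b = j) (hadj : ¬ G.Adj u v)
    (hlo : f u < f v) (hhi : f v ≤ f u + (b - 1)) :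
    sFun G f b j v ≤ 1 + (((f v : ℝ) - (f u : ℝ)) - 1) / ((b : ℝ) + 1) := by
  have hb1 : (0 : ℝ) < (b : ℝ) + 1 := by positivity
  have hbR : (1 : ℝ) ≤ (b : ℝ) := by exact_mod_cast hb
  have hd1 : (1 : ℝ) ≤ (f v : ℝ) - (f u : ℝ) := by
    have h : f u + 1 ≤ f v := hlo
    have : ((f u : ℝ)) + 1 ≤ (f v : ℝ) := by exact_mod_cast h
    linarith
  set d : ℝ := (f v : ℝ) - (f u : ℝ) with hd_def
  have hdb : d ≤ (b : ℝ) - 1 := by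
    have h : f v ≤ f u + (b - 1) := hhi
    have h2 : ((f v : ℕ) : ℝ) ≤ ((f u + (b - 1) : ℕ) : ℝ) := by exact_mod_cast h
    push_cast [Nat.cast_sub (Nat.one_le_iff_ne_zero.2 (Nat.pos_iff_ne_zero.1 hb))] at h2
    simp only [hd_def]; linarith
  apply csSup_le (sSet_nonempty _)
  rintro z (rfl | ⟨q, hq, w, rfl⟩)
  · have : (0:ℝ) ≤ (d - 1) / ((b : ℝ) + 1) := by
      apply div_nonneg (by linarith) (by linarith)
    linarith
  · have hmod : f q ≡ f u [MOD b] := by unfold Nat.ModEq; rw [hq, hu]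
    obtain ⟨m, hm⟩ := (Nat.modEq_iff_dvd.1 hmod)
    have hmR : (f u : ℝ) - (f q : ℝ) = (b : ℝ) * (m : ℝ) := by exact_mod_cast hm
    have hwb := walk_bound hband w
    have hfveq : (f v : ℝ) = (f u : ℝ) + d := by simp only [hd_def]; ring
    rcases lt_trichotomy m 0 with hmlt | hmeq | hmgt
    · -- center strictly to the right of `v`: walk has length ≥ 1
      have hm1 : (1 : ℝ) ≤ -(m : ℝ) := by
        have : (m : ℝ) ≤ -1 := by exact_mod_cast Int.le_sub_one_of_lt hmlt
        linarith
      have hprod : (b : ℝ) ≤ (b : ℝ) * (-(m : ℝ)) := by nlinarith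
      have hqv : (f v : ℝ) < (f q : ℝ) := by
        have hfq : (f q : ℝ) = (f u : ℝ) + (b : ℝ) * (-(m:ℝ)) := by linarith
        linarith
      have h0 : w.length ≠ 0 := by
        intro h0
        have hqv' := SimpleGraph.Walk.eq_of_length_eq_zero h0
        rw [hqv'] at hqv
        exact lt_irrefl _ hqv
      have hk1 : (1 : ℝ) ≤ (w.length : ℝ) := by
        have : 1 ≤ w.length := Nat.pos_of_ne_zero h0
        exact_mod_cast this
      have hfrac : ((f v : ℝ) - (f q : ℝ)) / ((b : ℝ) + 1) ≤ (d - 1) / ((b : ℝ) + 1) :=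
        (div_le_div_iff_of_pos_right hb1).2 (by linarith)
      linarith
    · -- `q = u`: walk from `u` to `v` has length ≥ 2
      subst hmeq
      have hfq : f q = f u := by simp at hm; omega
      have hqu : q = u := hf hfq
      have hfqR : (f q : ℝ) = (f u : ℝ) := by rw [hfq]
      have hk2 : (2 : ℝ) ≤ (w.length : ℝ) := by
        have h0 : w.length ≠ 0 := by
          intro h
          have h2 := SimpleGraph.Walk.eq_of_length_eq_zero h
          rw [hqu] at h2
          rw [h2] at hlo
          exact lt_irrefl _ hlo
        have h1 : w.length ≠ 1 := fun h => by
          have := SimpleGraph.Walk.adj_of_length_eq_one h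
          rw [hqu] at this
          exact hadj this
        have : 2 ≤ w.length := by omega
        exact_mod_cast this
      have h1D : 1 / ((b : ℝ) + 1) ≤ 1 := by
        rw [div_le_one hb1]; linarith
      have hsplit : ((f v : ℝ) - (f q : ℝ)) / ((b : ℝ) + 1) =
          (d - 1) / ((b : ℝ) + 1) + 1 / ((b : ℝ) + 1) := by
        rw [← add_div, hfqR]; simp only [hd_def]; ring_nf
      rw [hsplit]; linarith
    · -- center strictly to the left of `u`: walk has length ≥ m + 1
      have hm1 : (1 : ℝ) ≤ (m : ℝ) := by exact_mod_cast hmgt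
      have hfq : (f q : ℝ) = (f u : ℝ) - (b : ℝ) * (m : ℝ) := by linarith
      have hnum : (f v : ℝ) - (f q : ℝ) = d + (m : ℝ) * (b : ℝ) := by
        rw [hfq, hfveq]; ring
      have habs : (f v : ℝ) - (f q : ℝ) ≤ (w.length : ℝ) * (b : ℝ) :=
        by linarith [(abs_le.1 hwb).1]
      have hlen : (m : ℝ) + 1 ≤ (w.length : ℝ) := by
        have hkZ : (m : ℝ) < (w.length : ℝ) := by nlinarith
        have h2 : m < (w.length : ℤ) := by exact_mod_cast hkZ
        have h3 : m + 1 ≤ (w.length : ℤ) := by omega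
        exact_mod_cast h3
      have hkey : ((m : ℝ) * (b : ℝ) + 1) / ((b : ℝ) + 1) ≤ (m : ℝ) := by
        rw [div_le_iff₀ hb1]; nlinarith
      rw [hnum]
      have hsplit : (d + (m : ℝ) * (b : ℝ)) / ((b : ℝ) + 1) =
          (d - 1) / ((b : ℝ) + 1) + ((m : ℝ) * (b : ℝ) + 1) / ((b : ℝ) + 1) := by
        rw [← add_div]; ring_nf
      rw [hsplit]; linarith

/-- Main construction: a layout with stretch at most `b` gives a cube representation
in `b+1` dimensions. -/
theorem hasCubeRep_of_layout [Fintype V] (G : SimpleGraph V) [DecidableRel G.Adj]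
    (f : V → ℕ) (hf : Function.Injective f) (b : ℕ) (hb : 0 < b)
    (hband : ∀ u v : V, G.Adj u v → f v ≤ f u + b) : HasCubeRep G (b + 1) := by
  classical
  have hbR : (1:ℝ) ≤ (b:ℝ) := by exact_mod_cast hb
  have hb0 : (0:ℝ) < (b:ℝ) := by linarith
  have hD0 : (0:ℝ) < (b:ℝ) + 1 := by linarith
  have hbandR : ∀ u v : V, G.Adj u v → (f v : ℝ) ≤ (f u : ℝ) + (b:ℝ) := by
    intro u v huv; exact_mod_cast hband u v huv
  set A : ℕ → ℕ → Bool := fun p q => decide (∃ u v : V, f u = p ∧ f v = q ∧ G.Adj u v)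
    with hA_def
  have hA : ∀ u v : V, A (f u) (f v) = true ↔ G.Adj u v := by
    intro u v
    simp only [hA_def, decide_eq_true_eq]
    constructor
    · rintro ⟨u', v', h1, h2, h3⟩
      rwa [hf h1, hf h2] at h3
    · exact fun h => ⟨u, v, rfl, rfl, h⟩
  set η : ℕ → ℝ := etaFun A b with hη_def
  have hηmem : ∀ p, 0 ≤ η p ∧ η p < 1 := fun p => etaFun_mem A b p
  -- the representation
  set c : V → Fin (b+1) → ℝ := fun x i =>
    if (i : ℕ) = 0 then (((f x):ℝ) + η (f x)) / b
    else ((f x : ℝ)) / ((b:ℝ)+1) - sFun G f b ((i:ℕ) - 1) x with hc_def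
  -- edges stay close in the slope coordinate
  have hslope_edge : ∀ u v : V, G.Adj u v →
      |(((f u):ℝ) + η (f u)) / b - (((f v):ℝ) + η (f v)) / b| ≤ 1 := by
    intro u v huv
    have h1 : f v ≤ f u + b := hband _ _ huv
    have h2 : f u ≤ f v + b := hband _ _ huv.symm
    rw [div_sub_div_same, abs_div, abs_of_pos hb0, div_le_one hb0]
    by_cases hc1 : f v = f u + b
    · have hA1 : A (f v - b) (f v) = true := by
        rw [show f v - b = f u by omega]; exact (hA u v).2 huv
      have he : η (f v) = η (f u) := by
        rw [hη_def] at *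
        rw [etaFun_true hb (by omega) hA1, show f v - b = f u by omega]
      have hfv : (f v : ℝ) = (f u : ℝ) + (b : ℝ) := by exact_mod_cast congrArg (Nat.cast (R := ℝ)) hc1
      rw [he, hfv]
      rw [abs_le]
      constructor <;> [linarith; linarith]
    · by_cases hc2 : f u = f v + b
      · have hA2 : A (f u - b) (f u) = true := by
          rw [show f u - b = f v by omega]; exact (hA v u).2 huv.symm
        have he : η (f u) = η (f v) := by
          rw [hη_def] at *
          rw [etaFun_true hb (by omega) hA2, show f u - b = f v by omega]
        have hfu : (f u : ℝ) = (f v : ℝ) + (b : ℝ) := by exact_mod_cast congrArg (Nat.cast (R := ℝ)) hc2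
        rw [he, hfu]
        rw [abs_le]
        constructor <;> [linarith; linarith]
      · have h3 : (f u : ℝ) - (f v : ℝ) ≤ (b:ℝ) - 1 := by
          have : f u ≤ f v + (b - 1) := by omega
          have := (show ((f u :ℕ):ℝ) ≤ ((f v + (b-1) : ℕ):ℝ) by exact_mod_cast this)
          push_cast [Nat.cast_sub (by omega : 1 ≤ b)] at this
          linarith
        have h4 : (f v : ℝ) - (f u : ℝ) ≤ (b:ℝ) - 1 := by
          have : f v ≤ f u + (b - 1) := by omega
          have := (show ((f v :ℕ):ℝ) ≤ ((f u + (b-1) : ℕ):ℝ) by exact_mod_cast this)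
          push_cast [Nat.cast_sub (by omega : 1 ≤ b)] at this
          linarith
        have e1 := hηmem (f u); have e2 := hηmem (f v)
        rw [abs_le]
        constructor <;> [linarith; linarith]
  -- edges stay close in every residue coordinate
  have hres_edge : ∀ (jj : ℕ) (u v : V), G.Adj u v →
      |(((f u):ℝ) / ((b:ℝ)+1) - sFun G f b jj u) - (((f v):ℝ) / ((b:ℝ)+1) - sFun G f b jj v)| ≤ 1 := by
    intro jj u v huv
    have l1 := sFun_lip (j := jj) hbandR huv
    have l2 := sFun_lip (j := jj) hbandR huv.symm
    have r1 : ((f u):ℝ) / ((b:ℝ)+1) - ((f v):ℝ) / ((b:ℝ)+1) +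
        (((f v):ℝ) - ((f u):ℝ)) / ((b:ℝ)+1) = 0 := by ring
    have r2 : ((f v):ℝ) / ((b:ℝ)+1) - ((f u):ℝ) / ((b:ℝ)+1) +
        (((f u):ℝ) - ((f v):ℝ)) / ((b:ℝ)+1) = 0 := by ring
    rw [abs_le]
    constructor <;> [linarith; linarith]
  -- the key separation claim for non-adjacent pairs (in increasing position)
  have key : ∀ u v : V, f u < f v → ¬ G.Adj u v → ∃ i : Fin (b+1), 1 < |c u i - c v i| := by
    intro u v hlo hadj
    by_cases hfar : f u + b ≤ f v
    · -- slope coordinate separates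
      refine ⟨⟨0, by omega⟩, ?_⟩
      have hcu : c u ⟨0, by omega⟩ = (((f u):ℝ) + η (f u)) / b := by simp [hc_def]
      have hcv : c v ⟨0, by omega⟩ = (((f v):ℝ) + η (f v)) / b := by simp [hc_def]
      rw [hcu, hcv, abs_sub_comm, div_sub_div_same, abs_div, abs_of_pos hb0,
        lt_div_iff₀ hb0]
      have e1 := hηmem (f u); have e2 := hηmem (f v)
      by_cases hc1 : f v = f u + b
      · have hA1 : A (f v - b) (f v) = false := by
          rw [show f v - b = f u by omega]
          rw [Bool.eq_false_iff]
          intro hcontra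
          exact hadj ((hA u v).1 hcontra)
        have he : η (f v) = (η (f u) + 1) / 2 := by
          rw [hη_def] at *
          rw [etaFun_false hb (by omega) hA1, show f v - b = f u by omega]
        have hgt : η (f u) < η (f v) := by rw [he]; linarith [e1.2]
        have hfv : (f v : ℝ) = (f u : ℝ) + (b : ℝ) := by
          exact_mod_cast congrArg (Nat.cast (R := ℝ)) hc1
        have : ((f v):ℝ) + η (f v) - (((f u):ℝ) + η (f u)) > (b:ℝ) := by
          rw [hfv]; linarith
        rw [abs_of_pos (by linarith)]
        linarith
      · -- distance at least b+1
        have hd : (f u : ℝ) + (b:ℝ) + 1 ≤ (f v : ℝ) := by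
          have : f u + b + 1 ≤ f v := by omega
          exact_mod_cast this
        have : ((f v):ℝ) + η (f v) - (((f u):ℝ) + η (f u)) > (b:ℝ) := by linarith [e1.2, e2.1]
        rw [abs_of_pos (by linarith)]
        linarith
    · -- residue coordinate `f u % b` separates
      have hjlt : f u % b < b := Nat.mod_lt _ hb
      refine ⟨⟨f u % b + 1, by omega⟩, ?_⟩
      have hcu : c u ⟨f u % b + 1, by omega⟩ =
          ((f u : ℝ)) / ((b:ℝ)+1) - sFun G f b (f u % b) u := by
        simp [hc_def]
      have hcv : c v ⟨f u % b + 1, by omega⟩ =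
          ((f v : ℝ)) / ((b:ℝ)+1) - sFun G f b (f u % b) v := by
        simp [hc_def]
      rw [hcu, hcv, abs_sub_comm]
      have hcen := sFun_center (j := f u % b) hbandR (rfl : f u % b = f u % b)
      have hvic := sFun_victim (j := f u % b) hb hf hbandR (rfl : f u % b = f u % b)
        hadj hlo (by omega)
      have hd1 : (1 : ℝ) ≤ (f v : ℝ) - (f u : ℝ) := by
        have h : f u + 1 ≤ f v := hlo
        have : ((f u : ℝ)) + 1 ≤ (f v : ℝ) := by exact_mod_cast h
        linarith
      have hsplit : ((f v : ℝ) - (f u : ℝ)) / ((b:ℝ)+1) =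
          (((f v : ℝ) - (f u : ℝ)) - 1) / ((b:ℝ)+1) + 1 / ((b:ℝ)+1) := by
        rw [← add_div]; ring_nf
      have hpos : (0:ℝ) < 1 / ((b:ℝ)+1) := by positivity
      have hr : ((f v):ℝ) / ((b:ℝ)+1) - ((f u):ℝ) / ((b:ℝ)+1) =
          ((f v : ℝ) - (f u : ℝ)) / ((b:ℝ)+1) := by ring
      have hval : (((f v):ℝ) / ((b:ℝ)+1) - sFun G f b (f u % b) v) -
          (((f u):ℝ) / ((b:ℝ)+1) - sFun G f b (f u % b) u) > 1 := by
        have expand : (((f v):ℝ) / ((b:ℝ)+1) - sFun G f b (f u % b) v) -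
            (((f u):ℝ) / ((b:ℝ)+1) - sFun G f b (f u % b) u) =
            ((f v : ℝ) - (f u : ℝ)) / ((b:ℝ)+1) +
              (sFun G f b (f u % b) u - sFun G f b (f u % b) v) := by
          rw [← hr]; ring
        rw [expand, hsplit]
        linarith
      rw [abs_of_pos (by linarith)]
      exact hval
  refine ⟨c, ?_⟩
  intro u v huv
  constructor
  · intro hadj i
    by_cases hi : (i : ℕ) = 0
    · have hcu : c u i = (((f u):ℝ) + η (f u)) / b := by simp only [hc_def, hi, if_true]
      have hcv : c v i = (((f v):ℝ) + η (f v)) / b := by simp only [hc_def, hi, if_true]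
      rw [hcu, hcv]; exact hslope_edge u v hadj
    · have hcu : c u i = ((f u : ℝ)) / ((b:ℝ)+1) - sFun G f b ((i:ℕ) - 1) u := by
        simp only [hc_def, hi, if_false]
      have hcv : c v i = ((f v : ℝ)) / ((b:ℝ)+1) - sFun G f b ((i:ℕ) - 1) v := by
        simp only [hc_def, hi, if_false]
      rw [hcu, hcv]; exact hres_edge _ u v hadj
  · intro hall
    by_contra hadj
    rcases Nat.lt_or_ge (f u) (f v) with hlt | hge
    · obtain ⟨i, hi⟩ := key u v hlt hadj
      exact absurd (hall i) (not_le.2 hi)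
    · have hne : f v < f u := by
        have : f u ≠ f v := fun h => huv (hf h)
        omega
      obtain ⟨i, hi⟩ := key v u hne (fun h => hadj h.symm)
      rw [abs_sub_comm] at hi
      exact absurd (hall i) (not_le.2 hi)

/-- The bandwidth-type layout for a co-comparability graph. -/
theorem exists_layout [Fintype V] (G : SimpleGraph V) [DecidableRel G.Adj]
    (hΔ : 0 < G.maxDegree) (hG : IsCoComparabilityGraph G) :
    ∃ e : V ≃ Fin (Fintype.card V), ∀ u v : V, G.Adj u v →
      ((e u : ℕ) : ℤ) - ((e v : ℕ) : ℤ) ≤ (2 * G.maxDegree - 1 : ℕ) := by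
  classical
  obtain ⟨r, htrans, hirr, hiff⟩ := hG
  letI : PartialOrder V :=
    { le := fun a b => r a b ∨ a = b
      le_refl := fun a => Or.inr rfl
      le_trans := by
        rintro a b c' (hab | rfl) (hbc | rfl)
        · exact Or.inl (htrans _ _ _ hab hbc)
        · exact Or.inl hab
        · exact Or.inl hbc
        · exact Or.inr rfl
      le_antisymm := by
        rintro a b (hab | rfl) hba
        · rcases hba with hba | rfl
          · exact absurd (htrans _ _ _ hab hba) (hirr _)
          · exact absurd hab (hirr _)
        · rfl }
  letI : Fintype (LinearExtension V) := ‹Fintype V›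
  let φ := monoEquivOfFin (LinearExtension V) (rfl : Fintype.card (LinearExtension V) = _)
  let e : V ≃ Fin (Fintype.card V) := φ.symm.toEquiv
  have hlt : ∀ a b : V, r a b → e a < e b := by
    intro a b hab
    have hne : a ≠ b := fun h => hirr a (h ▸ hab)
    have hle : toLinearExtension a ≤ toLinearExtension b :=
      toLinearExtension.monotone' (Or.inl hab)
    have hltL : toLinearExtension (α := V) a < toLinearExtension b :=
      lt_of_le_of_ne hle (fun h => hne h)
    exact φ.symm.strictMono hltL
  refine ⟨e, ?_⟩
  intro u v huv
  set Δ : ℕ := G.maxDegree with hΔ_def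
  rcases le_or_gt (e u) (e v) with hle | hgt
  · have h1 : (e u : ℕ) ≤ (e v : ℕ) := hle
    omega
  · -- `e v < e u`; count the vertices strictly between
    have hvu : (e v : ℕ) < (e u : ℕ) := hgt
    set S : Finset V := Finset.univ.filter (fun w => e v < e w ∧ e w < e u) with hS_def
    have himage : S.image e = Finset.Ioo (e v) (e u) := by
      ext i
      simp only [hS_def, Finset.mem_image, Finset.mem_filter, Finset.mem_univ, true_and,
        Finset.mem_Ioo]
      constructor
      · rintro ⟨w, hw, rfl⟩; exact hw
      · intro hi
        exact ⟨e.symm i, by simpa using hi, by simp⟩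
    have hcardS : S.card = (e u : ℕ) - (e v : ℕ) - 1 := by
      rw [← Finset.card_image_of_injective S e.injective, himage, Fin.card_Ioo]
    have hsub : S ⊆ (G.neighborFinset u).erase v ∪ (G.neighborFinset v).erase u := by
      intro w hw
      simp only [hS_def, Finset.mem_filter, Finset.mem_univ, true_and] at hw
      have hwu : w ≠ u := fun h => absurd (h ▸ hw.2) (lt_irrefl _)
      have hwv : w ≠ v := fun h => absurd (h ▸ hw.1) (lt_irrefl _)
      have hadj : G.Adj u w ∨ G.Adj w v := by
        by_contra hcon
        push_neg at hcon
        have h1 : r v w := by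
          rcases (hiff v w (Ne.symm hwv)).1 (fun h => hcon.2 h.symm) with h | h
          · exact h
          · exact absurd (hlt _ _ h) (not_lt.2 (le_of_lt hw.1))
        have h2 : r w u := by
          rcases (hiff w u hwu).1 (fun h => hcon.1 h.symm) with h | h
          · exact h
          · exact absurd (hlt _ _ h) (not_lt.2 (le_of_lt hw.2))
        exact (hiff v u (fun h => absurd (h ▸ hvu) (lt_irrefl _))).2
          (Or.inl (htrans _ _ _ h1 h2)) huv.symm
      rcases hadj with h | h
      · exact Finset.mem_union_left _ (Finset.mem_erase.2 ⟨hwv, by simpa using h⟩)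
      · exact Finset.mem_union_right _ (Finset.mem_erase.2 ⟨hwu, by simpa using h.symm⟩)
    have hcard1 : ((G.neighborFinset u).erase v).card = G.degree u - 1 := by
      rw [Finset.card_erase_of_mem (by simpa using huv), G.card_neighborFinset_eq_degree]
    have hcard2 : ((G.neighborFinset v).erase u).card = G.degree v - 1 := by
      rw [Finset.card_erase_of_mem (by simpa using huv.symm), G.card_neighborFinset_eq_degree]
    have hdu : 1 ≤ G.degree u := by
      rw [← G.card_neighborFinset_eq_degree]
      exact Finset.card_pos.2 ⟨v, by simpa using huv⟩
    have hdegu := G.degree_le_maxDegree u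
    have hdegv := G.degree_le_maxDegree v
    have hchain : S.card ≤ (G.degree u - 1) + (G.degree v - 1) := by
      calc S.card ≤ ((G.neighborFinset u).erase v ∪ (G.neighborFinset v).erase u).card :=
            Finset.card_le_card hsub
        _ ≤ ((G.neighborFinset u).erase v).card + ((G.neighborFinset v).erase u).card :=
            Finset.card_union_le _ _
        _ = (G.degree u - 1) + (G.degree v - 1) := by rw [hcard1, hcard2]
    have : (e u : ℕ) - (e v : ℕ) - 1 ≤ (Δ - 1) + (Δ - 1) := by
      rw [← hcardS]
      omega
    omega

end CoCompAux

/-- a co-comparability graph with maximum degree `Δ ≥ 1` has bandwidth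
at most `2Δ - 1`, and consequently cubicity at most `2Δ`. -/
theorem coComparability_bandwidth_cubicity {V : Type*} [Fintype V] (G : SimpleGraph V)
    [DecidableRel G.Adj] (hΔ : 0 < G.maxDegree) (hG : IsCoComparabilityGraph G) :
    bandwidth G ≤ 2 * G.maxDegree - 1 ∧ cubicity G ≤ 2 * G.maxDegree := by
  obtain ⟨e, he⟩ := CoCompAux.exists_layout G hΔ hG
  constructor
  · apply Nat.sInf_le
    exact ⟨e, fun u v huv => abs_le.2 ⟨by linarith [he v u huv.symm], he u v huv⟩⟩
  · apply Nat.sInf_le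
    have hb : 0 < 2 * G.maxDegree - 1 + 1 := by omega
    have hrep := CoCompAux.hasCubeRep_of_layout G (fun v => (e v : ℕ))
      (fun a b hab => e.injective (Fin.ext hab)) (2 * G.maxDegree - 1) (by omega)
      (fun u v huv => by
        have h1 := he v u huv.symm
        show (e v : ℕ) ≤ (e u : ℕ) + (2 * G.maxDegree - 1)
        omega)
    have : 2 * G.maxDegree - 1 + 1 = 2 * G.maxDegree := by omega
    rwa [this] at hrep
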